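/- arXiv:2212.14139 — 3 statements merged into one kernel-verified Lean document; each statement's English description precedes it below -/
import Mathlib

section
/- Let a, b be nonzero integers such that −ab is not a perfect square, and let ε ∈ {1, −1}. Then X, Y ∈ M₂(ℤ) satisfy aX² + bY² = 2ε·I and XY = YX if and only if one of the following holds: (i) X = t₁I and Y = t₂I for integers t₁, t₂ with a·t₁² + b·t₂² = 2ε; (ii) X = t₁I and Y = [[t₄, t₂],[t₃, −t₄]] for integers t₁, t₂, t₃, t₄ with a·t₁² + b(t₄² + t₂t₃) = 2ε; (iii) there exist integers t₁, t₂, t₃, t₄, u, v, x, y with u ≠ 2ε, g = gcd(va, u − 2ε), such that 2ε·x = u·t₁ + v·b·t₄ and 2ε·y = v·a·t₁ − u·t₄, X = [[t₁, ((u−2ε)/g)·t₂],[((u−2ε)/g)·t₃, x]], Y = [[t₄, (va/g)·t₂],[(va/g)·t₃, y]], and the relations u² + abv² = 4 and g²(a·t₁² + b·t₄²) + 4a·t₂t₃·(2 − εu) = 2ε·g² hold. -/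
private lemma aux_sq (a b m n : ℤ) (hm : m ≠ 0) (hn : n ≠ 0)
    (h : a * m ^ 2 + b * n ^ 2 = 0) : ∃ s : ℤ, -(a * b) = s ^ 2 := by
  have h2 : (a * m) ^ 2 = n ^ 2 * (-(a * b)) := by linear_combination a * h
  have hdvd : n ∣ a * m := (Int.pow_dvd_pow_iff two_ne_zero).mp ⟨-(a * b), h2⟩
  obtain ⟨c, hc⟩ := hdvd
  refine ⟨c, ?_⟩
  have h3 : n ^ 2 * (-(a * b)) = n ^ 2 * c ^ 2 := by rw [← h2, hc]; ring
  exact (mul_left_cancel₀ (pow_ne_zero 2 hn) h3)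

private lemma aux_pair (p p' : ℤ) (hp : p ≠ 0) :
    ∃ m n g : ℤ, IsCoprime m n ∧ m ≠ 0 ∧ p = m * g ∧ p' = n * g ∧
      ∀ s s' : ℤ, p * s' = p' * s → ∃ w, s = m * w ∧ s' = n * w := by
  set e : ℤ := (Int.gcd p p' : ℤ) with he
  have hgpos : 0 < Int.gcd p p' := Int.gcd_pos_of_ne_zero_left p' hp
  have hep : e * (p / e) = p := Int.mul_ediv_cancel' (Int.gcd_dvd_left _ _)
  have hep' : e * (p' / e) = p' := Int.mul_ediv_cancel' (Int.gcd_dvd_right _ _)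
  set m := p / e with hm; set n := p' / e with hn
  have hene : e ≠ 0 := by positivity
  have hco : IsCoprime m n := Int.isCoprime_iff_gcd_eq_one.mpr (Int.gcd_div_gcd_div_gcd hgpos)
  have hmne : m ≠ 0 := by intro h0; rw [h0, mul_zero] at hep; exact hp hep.symm
  refine ⟨m, n, e, hco, hmne, by linarith [hep], by linarith [hep'], ?_⟩
  intro s s' hss
  have hkey : m * s' = n * s := by
    apply mul_left_cancel₀ hene
    calc e * (m * s') = (e * m) * s' := by ring
      _ = p * s' := by rw [hep]
      _ = p' * s := hss
      _ = (e * n) * s := by rw [hep']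
      _ = e * (n * s) := by ring
  have hds : m ∣ s := hco.dvd_of_dvd_mul_left ⟨s', hkey.symm⟩
  obtain ⟨w, hw⟩ := hds
  refine ⟨w, hw, ?_⟩
  apply mul_left_cancel₀ hmne
  rw [hkey, hw]; ring

private lemma aux_prop (p q r p' q' r' : ℤ) (h1 : p * q' = p' * q) (h2 : p * r' = p' * r)
    (h3 : q * r' = q' * r) (hne : ¬(p = 0 ∧ q = 0 ∧ r = 0)) :
    ∃ m n w1 w2 w3 : ℤ, IsCoprime m n ∧ m ≠ 0 ∧ p = m * w1 ∧ q = m * w2 ∧ r = m * w3 ∧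
      p' = n * w1 ∧ q' = n * w2 ∧ r' = n * w3 := by
  by_cases hp : p ≠ 0
  · obtain ⟨m, n, g, hco, hmne, hpg, hpg', hprop⟩ := aux_pair p p' hp
    obtain ⟨w2, hw2, hw2'⟩ := hprop q q' h1
    obtain ⟨w3, hw3, hw3'⟩ := hprop r r' h2
    exact ⟨m, n, g, w2, w3, hco, hmne, hpg, hw2, hw3, hpg', hw2', hw3'⟩
  · push_neg at hp
    by_cases hq : q ≠ 0
    · have hp' : p' = 0 := by
        rcases mul_eq_zero.mp (show p' * q = 0 by rw [← h1, hp, zero_mul]) with h | h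
        · exact h
        · exact absurd h hq
      obtain ⟨m, n, g, hco, hmne, hpg, hpg', hprop⟩ := aux_pair q q' hq
      obtain ⟨w3, hw3, hw3'⟩ := hprop r r' h3
      exact ⟨m, n, 0, g, w3, hco, hmne, by rw [hp, mul_zero], hpg, hw3,
        by rw [hp', mul_zero], hpg', hw3'⟩
    · push_neg at hq
      have hr : r ≠ 0 := fun h0 => hne ⟨hp, hq, h0⟩
      have hp' : p' = 0 := by
        rcases mul_eq_zero.mp (show p' * r = 0 by rw [← h2, hp, zero_mul]) with h | h
        · exact h
        · exact absurd h hr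
      have hq' : q' = 0 := by
        rcases mul_eq_zero.mp (show q' * r = 0 by rw [← h3, hq, zero_mul]) with h | h
        · exact h
        · exact absurd h hr
      obtain ⟨m, n, g, hco, hmne, hpg, hpg', _⟩ := aux_pair r r' hr
      exact ⟨m, n, 0, 0, g, hco, hmne, by rw [hp, mul_zero], by rw [hq, mul_zero], hpg,
        by rw [hp', mul_zero], by rw [hq', mul_zero], hpg'⟩

theorem stmt_17 (a b : ℤ) (ha : a ≠ 0) (hb : b ≠ 0)
    (hnsq : ¬ ∃ s : ℤ, -(a * b) = s ^ 2) (ε : ℤ) (hε : ε = 1 ∨ ε = -1)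
    (X Y : Matrix (Fin 2) (Fin 2) ℤ) :
    (a • X ^ 2 + b • Y ^ 2 = (2 * ε) • (1 : Matrix (Fin 2) (Fin 2) ℤ) ∧ X * Y = Y * X) ↔
    ((∃ t₁ t₂ : ℤ, X = t₁ • (1 : Matrix (Fin 2) (Fin 2) ℤ) ∧
        Y = t₂ • (1 : Matrix (Fin 2) (Fin 2) ℤ) ∧ a * t₁ ^ 2 + b * t₂ ^ 2 = 2 * ε) ∨
     (∃ t₁ t₂ t₃ t₄ : ℤ, X = t₁ • (1 : Matrix (Fin 2) (Fin 2) ℤ) ∧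
        Y = !![t₄, t₂; t₃, -t₄] ∧ a * t₁ ^ 2 + b * (t₄ ^ 2 + t₂ * t₃) = 2 * ε) ∨
     (∃ t₁ t₂ t₃ t₄ u v x y g : ℤ, u ≠ 2 * ε ∧ g = Int.gcd (v * a) (u - 2 * ε) ∧
        2 * ε * x = u * t₁ + v * b * t₄ ∧ 2 * ε * y = v * a * t₁ - u * t₄ ∧
        X = !![t₁, ((u - 2 * ε) / g) * t₂; ((u - 2 * ε) / g) * t₃, x] ∧
        Y = !![t₄, (v * a / g) * t₂; (v * a / g) * t₃, y] ∧
        u ^ 2 + a * b * v ^ 2 = 4 ∧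
        g ^ 2 * (a * t₁ ^ 2 + b * t₄ ^ 2) + 4 * a * t₂ * t₃ * (2 - ε * u) = 2 * ε * g ^ 2)) := by
  have hε2 : ε ^ 2 = 1 := by rcases hε with h | h <;> rw [h] <;> ring
  have hεne : ε ≠ 0 := by rcases hε with h | h <;> rw [h] <;> decide
  have h2ε : (2 * ε) ≠ 0 := by rcases hε with h | h <;> rw [h] <;> decide
  constructor
  · -- FORWARD
    rintro ⟨h1, h2⟩
    have e00 := congrFun (congrFun h1 0) 0
    have e01 := congrFun (congrFun h1 0) 1
    have e10 := congrFun (congrFun h1 1) 0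
    have e11 := congrFun (congrFun h1 1) 1
    have c00 := congrFun (congrFun h2 0) 0
    have c01 := congrFun (congrFun h2 0) 1
    have c10 := congrFun (congrFun h2 1) 0
    simp only [pow_two, Matrix.add_apply, Matrix.smul_apply, Matrix.mul_apply, Fin.sum_univ_two,
      Matrix.one_apply, Fin.isValue, smul_eq_mul, ite_true, ite_false, reduceIte, Fin.reduceEq,
      mul_one, mul_zero, one_ne_zero, zero_ne_one] at e00 e01 e10 e11 c00 c01 c10
    by_cases hXs : X 0 1 = 0 ∧ X 1 0 = 0 ∧ X 0 0 = X 1 1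
    · obtain ⟨hx2, hx3, hx14⟩ := hXs
      by_cases hYs : Y 0 1 = 0 ∧ Y 1 0 = 0 ∧ Y 0 0 = Y 1 1
      · obtain ⟨hy2, hy3, hy14⟩ := hYs
        left
        refine ⟨X 0 0, Y 0 0, ?_, ?_, ?_⟩
        · ext i j
          fin_cases i <;> fin_cases j <;>
            simp only [Matrix.smul_apply, Matrix.one_apply, Fin.isValue, smul_eq_mul, ite_true,
              ite_false, reduceIte, Fin.reduceEq, Fin.zero_eta, Fin.mk_one, mul_one, mul_zero,
              one_ne_zero, zero_ne_one]
          · exact hx2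
          · exact hx3
          · exact hx14.symm
        · ext i j
          fin_cases i <;> fin_cases j <;>
            simp only [Matrix.smul_apply, Matrix.one_apply, Fin.isValue, smul_eq_mul, ite_true,
              ite_false, reduceIte, Fin.reduceEq, Fin.zero_eta, Fin.mk_one, mul_one, mul_zero,
              one_ne_zero, zero_ne_one]
          · exact hy2
          · exact hy3
          · exact hy14.symm
        · linear_combination e00 - a * (X 1 0) * hx2 - b * (Y 1 0) * hy2
      · right; left
        have hb1 : Y 0 1 * (Y 0 0 + Y 1 1) = 0 := by
          apply mul_left_cancel₀ hb
          linear_combination e01 - a * (X 0 0 + X 1 1) * hx2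
        have hb2 : Y 1 0 * (Y 0 0 + Y 1 1) = 0 := by
          apply mul_left_cancel₀ hb
          linear_combination e10 - a * (X 0 0 + X 1 1) * hx3
        have hb3 : (Y 0 0 - Y 1 1) * (Y 0 0 + Y 1 1) = 0 := by
          apply mul_left_cancel₀ hb
          linear_combination e00 - e11 - a * (X 0 0 + X 1 1) * hx14
        have hsum : Y 0 0 + Y 1 1 = 0 := by
          by_contra hs
          refine hYs ⟨?_, ?_, ?_⟩
          · rcases mul_eq_zero.mp hb1 with h | h
            · exact h
            · exact absurd h hs
          · rcases mul_eq_zero.mp hb2 with h | h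
            · exact h
            · exact absurd h hs
          · rcases mul_eq_zero.mp hb3 with h | h
            · linarith
            · exact absurd h hs
        refine ⟨X 0 0, Y 0 1, Y 1 0, Y 0 0, ?_, ?_, ?_⟩
        · ext i j
          fin_cases i <;> fin_cases j <;>
            simp only [Matrix.smul_apply, Matrix.one_apply, Fin.isValue, smul_eq_mul, ite_true,
              ite_false, reduceIte, Fin.reduceEq, Fin.zero_eta, Fin.mk_one, mul_one, mul_zero,
              one_ne_zero, zero_ne_one]
          · exact hx2
          · exact hx3
          · exact hx14.symm
        · ext i j
          fin_cases i <;> fin_cases j <;>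
            simp only [Matrix.of_apply, Matrix.cons_val', Matrix.cons_val_zero, Matrix.cons_val_one,
              Matrix.head_cons, Matrix.empty_val', Matrix.cons_val_fin_one, Matrix.head_fin_const,
              Fin.zero_eta, Fin.mk_one, Fin.isValue]
          all_goals (first | rfl | linarith)
        · linear_combination e00 - a * (X 1 0) * hx2
    · right; right
      have hne : ¬(X 0 0 - X 1 1 = 0 ∧ X 0 1 = 0 ∧ X 1 0 = 0) := by
        rintro ⟨hA, hB, hC⟩
        exact hXs ⟨hB, hC, by linarith⟩
      have m1 : (X 0 0 - X 1 1) * Y 0 1 = (Y 0 0 - Y 1 1) * X 0 1 := by linear_combination c01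
      have m2 : (X 0 0 - X 1 1) * Y 1 0 = (Y 0 0 - Y 1 1) * X 1 0 := by linear_combination -c10
      have m3 : X 0 1 * Y 1 0 = Y 0 1 * X 1 0 := by linear_combination c00
      obtain ⟨m, n, w1, w2, w3, hco, hm0, hP1, hP2, hP3, hP4, hP5, hP6⟩ :=
        aux_prop (X 0 0 - X 1 1) (X 0 1) (X 1 0) (Y 0 0 - Y 1 1) (Y 0 1) (Y 1 0) m1 m2 m3 hne
      have hgcd1 : Int.gcd m n = 1 := Int.isCoprime_iff_gcd_eq_one.mp hco
      have hx4 : X 1 1 = X 0 0 - m * w1 := by linarith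
      have hy4 : Y 1 1 = Y 0 0 - n * w1 := by linarith
      simp only [hP2, hP3, hx4, hP5, hP6, hy4] at e00 e01 e10 e11
      set x1 := X 0 0 with hx1
      set y1 := Y 0 0 with hy1
      -- the key linear relation
      have hw : ¬(w1 = 0 ∧ w2 = 0 ∧ w3 = 0) := by
        rintro ⟨hA, hB, hC⟩
        exact hXs ⟨by rw [hP2, hB, mul_zero], by rw [hP3, hC, mul_zero],
          by rw [hx4, hA, mul_zero, sub_zero]⟩
      have hC1 : a * m * (2 * x1 - m * w1) + b * n * (2 * y1 - n * w1) = 0 := by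
        by_contra hC
        refine hw ⟨?_, ?_, ?_⟩
        · rcases mul_eq_zero.mp (show w1 * (a * m * (2 * x1 - m * w1) + b * n * (2 * y1 - n * w1))
              = 0 by linear_combination e00 - e11) with h | h
          · exact h
          · exact absurd h hC
        · rcases mul_eq_zero.mp (show w2 * (a * m * (2 * x1 - m * w1) + b * n * (2 * y1 - n * w1))
              = 0 by linear_combination e01) with h | h
          · exact h
          · exact absurd h hC
        · rcases mul_eq_zero.mp (show w3 * (a * m * (2 * x1 - m * w1) + b * n * (2 * y1 - n * w1))
              = 0 by linear_combination e10) with h | h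
          · exact h
          · exact absurd h hC
      have hD : a * m ^ 2 + b * n ^ 2 ≠ 0 := by
        intro h0
        rcases eq_or_ne n 0 with hn | hn
        · rw [hn] at h0
          exact (mul_ne_zero ha (pow_ne_zero 2 hm0)) (by linear_combination h0)
        · exact hnsq (aux_sq a b m n hm0 hn h0)
      set u := a * (x1 * (x1 - m * w1) - m ^ 2 * (w2 * w3))
        - b * (y1 * (y1 - n * w1) - n ^ 2 * (w2 * w3)) with hu_def
      set v := x1 * (y1 - n * w1) + (x1 - m * w1) * y1 - 2 * m * n * (w2 * w3) with hv_def
      have hu : (a * m ^ 2 + b * n ^ 2) * u = 2 * ε * (b * n ^ 2 - a * m ^ 2) := by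
        linear_combination (a * m ^ 2 + b * n ^ 2) * hu_def + (b * n ^ 2 - a * m ^ 2) * e00
          + (a * m * x1 - b * n * y1) * hC1
      have hv : (a * m ^ 2 + b * n ^ 2) * v = -(4 * ε * m * n) := by
        linear_combination (a * m ^ 2 + b * n ^ 2) * hv_def + (-2 * m * n) * e00
          + (n * x1 + m * y1) * hC1
      have huv : u ^ 2 + a * b * v ^ 2 = 4 := by
        have key : (a * m ^ 2 + b * n ^ 2) ^ 2 * (u ^ 2 + a * b * v ^ 2)
            = (a * m ^ 2 + b * n ^ 2) ^ 2 * 4 := by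
          linear_combination ((a * m ^ 2 + b * n ^ 2) * u + 2 * ε * (b * n ^ 2 - a * m ^ 2)) * hu
            + a * b * ((a * m ^ 2 + b * n ^ 2) * v - 4 * ε * m * n) * hv
            + 4 * (a * m ^ 2 + b * n ^ 2) ^ 2 * hε2
        exact mul_left_cancel₀ (pow_ne_zero 2 hD) key
      have hxx : 2 * ε * (x1 - m * w1) = u * x1 + v * b * y1 := by
        apply mul_left_cancel₀ hD
        linear_combination (-x1) * hu + (-(b * y1)) * hv + 2 * ε * m * hC1
      have hyy : 2 * ε * (y1 - n * w1) = v * a * x1 - u * y1 := by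
        apply mul_left_cancel₀ hD
        linear_combination y1 * hu + (-(a * x1)) * hv + 2 * ε * n * hC1
      obtain ⟨c, d, hcd⟩ := hco
      set α := c * (u - 2 * ε) + d * (v * a) with hα_def
      have hDα : (a * m ^ 2 + b * n ^ 2) * α = -(4 * ε * a * m) := by
        linear_combination (a * m ^ 2 + b * n ^ 2) * hα_def + c * hu + d * a * hv
          - 4 * ε * a * m * hcd
      have hαm : m * α = u - 2 * ε := by
        apply mul_left_cancel₀ hD
        linear_combination m * hDα - hu
      have hαn : n * α = v * a := by
        apply mul_left_cancel₀ hD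
        linear_combination n * hDα - a * hv
      have hune : u - 2 * ε ≠ 0 := by
        intro h0
        have h4 : (4 : ℤ) * ε * a * m ^ 2 ≠ 0 :=
          mul_ne_zero (mul_ne_zero (mul_ne_zero (by norm_num) hεne) ha) (pow_ne_zero 2 hm0)
        have hDu2 : (a * m ^ 2 + b * n ^ 2) * (u - 2 * ε) = -(4 * ε * a * m ^ 2) := by
          linear_combination hu
        rw [h0, mul_zero] at hDu2
        exact h4 (by linarith)
      have hαne : α ≠ 0 := fun h0 => hune (by rw [← hαm, h0, mul_zero])
      obtain ⟨σ, hσ1, hσα⟩ : ∃ σ : ℤ, σ * σ = 1 ∧ σ * |α| = α := by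
        rcases le_or_gt 0 α with h | h
        · exact ⟨1, by ring, by rw [abs_of_nonneg h]; ring⟩
        · exact ⟨-1, by ring, by rw [abs_of_neg h]; ring⟩
      have hgval : ((Int.gcd (v * a) (u - 2 * ε) : ℤ)) = |α| := by
        rw [show v * a = n * α from hαn.symm, show u - 2 * ε = m * α from hαm.symm,
          Int.gcd_mul_right, Int.gcd_comm n m, hgcd1, one_mul]
        exact (Int.abs_eq_natAbs α).symm
      have habsne : |α| ≠ 0 := abs_ne_zero.mpr hαne
      have hq1 : (u - 2 * ε) / ((Int.gcd (v * a) (u - 2 * ε) : ℤ)) = m * σ := by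
        have h' : u - 2 * ε = (m * σ) * |α| := by linear_combination (-1) * hαm - m * hσα
        rw [hgval, h', Int.mul_ediv_cancel _ habsne]
      have hq2 : (v * a) / ((Int.gcd (v * a) (u - 2 * ε) : ℤ)) = n * σ := by
        have h' : v * a = (n * σ) * |α| := by linear_combination (-1) * hαn - n * hσα
        rw [hgval, h', Int.mul_ediv_cancel _ habsne]
      refine ⟨x1, σ * w2, σ * w3, y1, u, v, x1 - m * w1, y1 - n * w1,
        (Int.gcd (v * a) (u - 2 * ε) : ℤ), sub_ne_zero.mp hune, rfl, hxx, hyy, ?_, ?_, huv, ?_⟩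
      · ext i j
        fin_cases i <;> fin_cases j <;>
          simp only [Matrix.of_apply, Matrix.cons_val', Matrix.cons_val_zero, Matrix.cons_val_one,
            Matrix.head_cons, Matrix.empty_val', Matrix.cons_val_fin_one, Matrix.head_fin_const,
            Fin.zero_eta, Fin.mk_one, Fin.isValue]
        all_goals first
          | rfl
          | exact hx4
          | (rw [hq1, hP2]; linear_combination (-(m * w2)) * hσ1)
          | (rw [hq1, hP3]; linear_combination (-(m * w3)) * hσ1)
      · ext i j
        fin_cases i <;> fin_cases j <;>
          simp only [Matrix.of_apply, Matrix.cons_val', Matrix.cons_val_zero, Matrix.cons_val_one,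
            Matrix.head_cons, Matrix.empty_val', Matrix.cons_val_fin_one, Matrix.head_fin_const,
            Fin.zero_eta, Fin.mk_one, Fin.isValue]
        all_goals first
          | rfl
          | exact hy4
          | (rw [hq2, hP5]; linear_combination (-(n * w2)) * hσ1)
          | (rw [hq2, hP6]; linear_combination (-(n * w3)) * hσ1)
      · rw [hgval, sq_abs]
        have key : (a * m ^ 2 + b * n ^ 2) ^ 2 *
            (α ^ 2 * (a * x1 ^ 2 + b * y1 ^ 2) + 4 * a * (σ * w2) * (σ * w3) * (2 - ε * u))
            = (a * m ^ 2 + b * n ^ 2) ^ 2 * (2 * ε * α ^ 2) := by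
          linear_combination ((a * m ^ 2 + b * n ^ 2) * α - 4 * ε * a * m)
              * (a * x1 ^ 2 + b * y1 ^ 2 - 2 * ε) * hDα
            - 4 * a * (w2 * w3) * (a * m ^ 2 + b * n ^ 2) * ε * hu
            + 16 * a ^ 2 * m ^ 2 * e00
            + (16 * a ^ 2 * m ^ 2 * (a * x1 ^ 2 + b * y1 ^ 2 - 2 * ε)
               - 8 * a * (w2 * w3) * (a * m ^ 2 + b * n ^ 2) * (b * n ^ 2 - a * m ^ 2)) * hε2
            + 4 * a * w2 * w3 * (2 - ε * u) * (a * m ^ 2 + b * n ^ 2) ^ 2 * hσ1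
        exact mul_left_cancel₀ (pow_ne_zero 2 hD) key
  · -- BACKWARD
    rintro (⟨t₁, t₂, hX, hY, h⟩ | ⟨t₁, t₂, t₃, t₄, hX, hY, h⟩ |
      ⟨t₁, t₂, t₃, t₄, u, v, x, y, g, hune, hg, hx, hy, hX, hY, huv, hrel⟩) <;> subst hX <;> subst hY
    · constructor
      · ext i j
        fin_cases i <;> fin_cases j <;>
          simp only [pow_two, Matrix.add_apply, Matrix.smul_apply, Matrix.mul_apply,
            Fin.sum_univ_two, Matrix.one_apply, Fin.isValue, smul_eq_mul, ite_true, ite_false,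
            reduceIte, Fin.reduceEq, Fin.zero_eta, Fin.mk_one, mul_one, mul_zero, one_ne_zero,
            zero_ne_one] <;>
          (first | ring1 | linear_combination h)
      · ext i j
        fin_cases i <;> fin_cases j <;>
          simp only [Matrix.mul_apply, Fin.sum_univ_two, Matrix.smul_apply, Matrix.one_apply,
            Fin.isValue, smul_eq_mul, ite_true, ite_false, reduceIte, Fin.reduceEq,
            Fin.zero_eta, Fin.mk_one, mul_one, mul_zero, one_ne_zero, zero_ne_one] <;> ring
    · constructor
      · ext i j
        fin_cases i <;> fin_cases j <;>
          simp only [pow_two, Matrix.add_apply, Matrix.smul_apply, Matrix.mul_apply,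
            Fin.sum_univ_two, Matrix.one_apply, Fin.isValue, smul_eq_mul, Matrix.of_apply,
            Matrix.cons_val', Matrix.cons_val_zero, Matrix.cons_val_one, Matrix.head_cons,
            Matrix.empty_val', Matrix.cons_val_fin_one, Matrix.head_fin_const, ite_true,
            ite_false, reduceIte, Fin.reduceEq, Fin.zero_eta, Fin.mk_one, mul_one, mul_zero,
            one_ne_zero, zero_ne_one] <;>
          (first | ring1 | linear_combination h)
      · ext i j
        fin_cases i <;> fin_cases j <;>
          simp only [Matrix.mul_apply, Fin.sum_univ_two, Matrix.smul_apply, Matrix.one_apply,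
            Fin.isValue, smul_eq_mul, Matrix.of_apply, Matrix.cons_val', Matrix.cons_val_zero,
            Matrix.cons_val_one, Matrix.head_cons, Matrix.empty_val', Matrix.cons_val_fin_one,
            Matrix.head_fin_const, ite_true, ite_false, reduceIte, Fin.reduceEq, Fin.zero_eta,
            Fin.mk_one, mul_one, mul_zero, one_ne_zero, zero_ne_one] <;> ring
    · have hgpos : (0 : ℤ) < g := by
        rw [hg]
        exact_mod_cast Int.gcd_pos_of_ne_zero_right (v * a) (sub_ne_zero.mpr hune)
      have hgne : g ≠ 0 := ne_of_gt hgpos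
      set p : ℤ := (u - 2 * ε) / g with hp_def
      set r : ℤ := v * a / g with hr_def
      have hp : u - 2 * ε = g * p := (Int.mul_ediv_cancel' (hg ▸ Int.gcd_dvd_right _ _)).symm
      have hr : v * a = g * r := (Int.mul_ediv_cancel' (hg ▸ Int.gcd_dvd_left _ _)).symm
      have h00 : a * (t₁ * t₁ + p * t₂ * (p * t₃)) + b * (t₄ * t₄ + r * t₂ * (r * t₃)) = 2 * ε := by
        apply mul_left_cancel₀ (pow_ne_zero 2 hgne)
        linear_combination hrel + t₂ * t₃ * (-a * (g * p + u - 2 * ε) * hp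
          - b * (g * r + v * a) * hr + a * huv + 4 * a * hε2)
      have h01 : a * (t₁ * (p * t₂) + p * t₂ * x) + b * (t₄ * (r * t₂) + r * t₂ * y) = 0 := by
        apply mul_left_cancel₀ (mul_ne_zero h2ε hgne)
        linear_combination (-2) * ε * a * t₂ * (t₁ + x) * hp - 2 * ε * b * t₂ * (t₄ + y) * hr
          + a * t₂ * (u - 2 * ε) * hx + b * t₂ * v * a * hy + a * t₂ * t₁ * huv
          - 4 * a * t₂ * t₁ * hε2
      have h10 : a * (p * t₃ * t₁ + x * (p * t₃)) + b * (r * t₃ * t₄ + y * (r * t₃)) = 0 := by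
        apply mul_left_cancel₀ (mul_ne_zero h2ε hgne)
        linear_combination (-2) * ε * a * t₃ * (t₁ + x) * hp - 2 * ε * b * t₃ * (t₄ + y) * hr
          + a * t₃ * (u - 2 * ε) * hx + b * t₃ * v * a * hy + a * t₃ * t₁ * huv
          - 4 * a * t₃ * t₁ * hε2
      have h11 : a * (p * t₃ * (p * t₂) + x * x) + b * (r * t₃ * (r * t₂) + y * y) = 2 * ε := by
        apply mul_left_cancel₀ (mul_ne_zero (by norm_num : (4:ℤ) ≠ 0) (pow_ne_zero 2 hgne))
        linear_combination g ^ 2 * (a * t₁ ^ 2 + b * t₄ ^ 2) * huv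
          + g ^ 2 * a * (2 * ε * x + u * t₁ + v * b * t₄) * hx
          + g ^ 2 * b * (2 * ε * y + v * a * t₁ - u * t₄) * hy
          - 4 * g ^ 2 * (a * x ^ 2 + b * y ^ 2) * hε2
          + 4 * t₂ * t₃ * (-a * (g * p + u - 2 * ε) * hp - b * (g * r + v * a) * hr
            + a * huv + 4 * a * hε2)
          + 4 * hrel
      have k01 : t₁ * (r * t₂) + p * t₂ * y = t₄ * (p * t₂) + r * t₂ * x := by
        apply mul_left_cancel₀ (mul_ne_zero h2ε hgne)
        linear_combination t₂ * (2 * ε * (-t₁ * hr - y * hp + t₄ * hp + x * hr)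
          + (u - 2 * ε) * hy - v * a * hx - t₄ * huv + 4 * t₄ * hε2)
      have k10 : p * t₃ * t₄ + x * (r * t₃) = r * t₃ * t₁ + y * (p * t₃) := by
        apply mul_left_cancel₀ (mul_ne_zero h2ε hgne)
        linear_combination t₃ * (-2 * ε * t₄ * hp - 2 * ε * x * hr + 2 * ε * t₁ * hr
          + 2 * ε * y * hp + v * a * hx - (u - 2 * ε) * hy + t₄ * huv - 4 * t₄ * hε2)
      constructor
      · ext i j
        fin_cases i <;> fin_cases j <;>
          simp only [pow_two, Matrix.add_apply, Matrix.smul_apply, Matrix.mul_apply,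
            Fin.sum_univ_two, Matrix.one_apply, Fin.isValue, smul_eq_mul, Matrix.of_apply,
            Matrix.cons_val', Matrix.cons_val_zero, Matrix.cons_val_one, Matrix.head_cons,
            Matrix.empty_val', Matrix.cons_val_fin_one, Matrix.head_fin_const, ite_true,
            ite_false, reduceIte, Fin.reduceEq, Fin.zero_eta, Fin.mk_one, mul_one, mul_zero,
            one_ne_zero, zero_ne_one]
        · linear_combination h00
        · linear_combination h01
        · linear_combination h10
        · linear_combination h11
      · ext i j
        fin_cases i <;> fin_cases j <;>
          simp only [Matrix.mul_apply, Fin.sum_univ_two, Fin.isValue, Matrix.of_apply,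
            Matrix.cons_val', Matrix.cons_val_zero, Matrix.cons_val_one, Matrix.head_cons,
            Matrix.empty_val', Matrix.cons_val_fin_one, Matrix.head_fin_const, Fin.zero_eta,
            Fin.mk_one]
        · ring
        · linear_combination k01
        · linear_combination k10
        · ring
end

section
/- Let b be a nonzero integer with b ≠ 3 such that −b is not a perfect square, and suppose b has a prime divisor p with p ≡ 3 (mod 8) or p ≡ 5 (mod 8). Then X, Y ∈ M₂(ℤ) satisfy X² + bY² = 2I if and only if one of the following holds: (i) X = [[t₁, t₂],[t₃, −t₁]] and Y = [[s₁, s₂],[s₃, −s₁]] for integers with t₁² + t₂t₃ + b(s₁² + s₂s₃) = 2; (ii) b > 0 and X = [[t₁, t₂],[t₃, −t₁]], Y = t₄I for integers with t₁² + t₂t₃ + b·t₄² = 2; (iii) b < 0 and there exist integers t₁, t₂, t₃, t₄, u, v, x, y with u ≠ 2, g = gcd(v, u − 2), such that 2x = u·t₁ + v·b·t₄ and 2y = v·t₁ − u·t₄, X = [[t₁, ((u−2)/g)·t₂],[((u−2)/g)·t₃, x]], Y = [[t₄, (v/g)·t₂],[(v/g)·t₃, y]], and the relations u² + bv² = 4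 and g²(t₁² + b·t₄²) + 4t₂t₃·(2 − u) = 2g² hold. -/
private lemma smul_one_fin_two' (r : ℤ) : r • (1 : Matrix (Fin 2) (Fin 2) ℤ) = !![r,0;0,r] := by
  ext i j
  fin_cases i <;> fin_cases j <;> simp [Matrix.one_apply]

private lemma sq_plus_mult_ne_two' (b : ℤ)
    (hp : ∃ p : ℕ, p.Prime ∧ (p : ℤ) ∣ b ∧ (p % 8 = 3 ∨ p % 8 = 5))
    (a m : ℤ) (h : a ^ 2 + b * m = 2) : False := by
  obtain ⟨p, pp, pd, p8⟩ := hp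
  haveI : Fact p.Prime := ⟨pp⟩
  have hp2 : p ≠ 2 := by omega
  have hb0 : ((b : ℤ) : ZMod p) = 0 := (ZMod.intCast_zmod_eq_zero_iff_dvd b p).mpr pd
  have h2 : ((a : ZMod p)) ^ 2 = 2 := by
    have := congrArg (fun z : ℤ => (z : ZMod p)) h
    push_cast at this
    rw [hb0] at this
    simpa using this
  have hsq : IsSquare (2 : ZMod p) := ⟨(a : ZMod p), by rw [← h2]; ring⟩
  rw [ZMod.exists_sq_eq_two_iff hp2] at hsq
  omega

private lemma rev_case_i (b t1 t2 t3 s1 s2 s3 : ℤ)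
    (hrel : t1 ^ 2 + t2 * t3 + b * (s1 ^ 2 + s2 * s3) = 2) :
    !![t1, t2; t3, -t1] ^ 2 + b • !![s1, s2; s3, -s1] ^ 2
      = (2 : ℤ) • (1 : Matrix (Fin 2) (Fin 2) ℤ) := by
  ext i j
  fin_cases i <;> fin_cases j <;>
    simp [pow_two, Matrix.mul_apply, Fin.sum_univ_two, Matrix.one_apply] <;>
    linarith [hrel]

private lemma rev_case_ii (b t1 t2 t3 t4 : ℤ) (hrel : t1 ^ 2 + t2 * t3 + b * t4 ^ 2 = 2) :
    !![t1, t2; t3, -t1] ^ 2 + b • (t4 • (1 : Matrix (Fin 2) (Fin 2) ℤ)) ^ 2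
      = (2 : ℤ) • (1 : Matrix (Fin 2) (Fin 2) ℤ) := by
  rw [smul_one_fin_two']
  ext i j
  fin_cases i <;> fin_cases j <;>
    simp [pow_two, Matrix.mul_apply, Fin.sum_univ_two, Matrix.one_apply] <;>
    linarith [hrel]

private lemma rev_case_iii (b t1 t2 t3 t4 u v x y g : ℤ) (hu2 : u ≠ 2)
    (hg : g = Int.gcd v (u - 2))
    (hx : 2 * x = u * t1 + v * b * t4) (hy : 2 * y = v * t1 - u * t4)
    (hu4 : u ^ 2 + b * v ^ 2 = 4)
    (hrel : g ^ 2 * (t1 ^ 2 + b * t4 ^ 2) + 4 * t2 * t3 * (2 - u) = 2 * g ^ 2) :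
    !![t1, ((u - 2) / g) * t2; ((u - 2) / g) * t3, x] ^ 2 +
      b • !![t4, (v / g) * t2; (v / g) * t3, y] ^ 2
      = (2 : ℤ) • (1 : Matrix (Fin 2) (Fin 2) ℤ) := by
  have hu2' : u - 2 ≠ 0 := fun h => hu2 (by omega)
  have hGpos : 0 < Int.gcd v (u - 2) := Int.gcd_pos_iff.mpr (Or.inr hu2')
  have hgne : g ≠ 0 := by rw [hg]; exact_mod_cast hGpos.ne'
  have hgdu : g ∣ (u - 2) := by rw [hg]; exact Int.gcd_dvd_right _ _
  have hgdv : g ∣ v := by rw [hg]; exact Int.gcd_dvd_left _ _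
  set w1 := (u - 2) / g with hw1
  set w2 := v / g with hw2
  have hgw1 : g * w1 = u - 2 := Int.mul_ediv_cancel' hgdu
  have hgw2 : g * w2 = v := Int.mul_ediv_cancel' hgdv
  have h2g : (2 : ℤ) * g ≠ 0 := mul_ne_zero two_ne_zero hgne
  have h4g2 : (4 : ℤ) * g ^ 2 ≠ 0 := mul_ne_zero (by norm_num) (pow_ne_zero 2 hgne)
  have hg2 : (g : ℤ) ^ 2 ≠ 0 := pow_ne_zero 2 hgne
  ext i j
  fin_cases i <;> fin_cases j <;>
    simp [pow_two, Matrix.mul_apply, Fin.sum_univ_two, Matrix.one_apply]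
  · refine mul_left_cancel₀ hg2 ?_
    linear_combination hrel + t2*t3*(g*w1 + (u-2))*hgw1 + b*t2*t3*(g*w2 + v)*hgw2 + t2*t3*hu4
  · refine mul_left_cancel₀ h2g ?_
    linear_combination t2*(2*t1 + 2*x)*hgw1 + b*t2*(2*t4 + 2*y)*hgw2 + t2*(u-2)*hx
      + b*v*t2*hy + t1*t2*hu4
  · refine mul_left_cancel₀ h2g ?_
    linear_combination t3*(2*t1 + 2*x)*hgw1 + b*t3*(2*t4 + 2*y)*hgw2 + t3*(u-2)*hx
      + b*v*t3*hy + t1*t3*hu4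
  · refine mul_left_cancel₀ h4g2 ?_
    linear_combination 4*hrel + 4*t2*t3*(g*w1 + (u-2))*hgw1 + 4*b*t2*t3*(g*w2 + v)*hgw2
      + 4*t2*t3*hu4 + g^2*(2*x + u*t1 + v*b*t4)*hx + b*g^2*(2*y + v*t1 - u*t4)*hy
      + g^2*(t1^2 + b*t4^2)*hu4

theorem stmt_18 (b : ℤ) (hb : b ≠ 0) (hb3 : b ≠ 3) (hnsq : ¬ ∃ s : ℤ, -b = s ^ 2)
    (hp : ∃ p : ℕ, p.Prime ∧ (p : ℤ) ∣ b ∧ (p % 8 = 3 ∨ p % 8 = 5))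
    (X Y : Matrix (Fin 2) (Fin 2) ℤ) :
    (X ^ 2 + b • Y ^ 2 = (2 : ℤ) • (1 : Matrix (Fin 2) (Fin 2) ℤ)) ↔
    ((∃ t₁ t₂ t₃ s₁ s₂ s₃ : ℤ, X = !![t₁, t₂; t₃, -t₁] ∧ Y = !![s₁, s₂; s₃, -s₁] ∧
        t₁ ^ 2 + t₂ * t₃ + b * (s₁ ^ 2 + s₂ * s₃) = 2) ∨
     (b > 0 ∧ ∃ t₁ t₂ t₃ t₄ : ℤ, X = !![t₁, t₂; t₃, -t₁] ∧
        Y = t₄ • (1 : Matrix (Fin 2) (Fin 2) ℤ) ∧ t₁ ^ 2 + t₂ * t₃ + b * t₄ ^ 2 = 2) ∨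
     (b < 0 ∧ ∃ t₁ t₂ t₃ t₄ u v x y g : ℤ, u ≠ 2 ∧ g = Int.gcd v (u - 2) ∧
        2 * x = u * t₁ + v * b * t₄ ∧ 2 * y = v * t₁ - u * t₄ ∧
        X = !![t₁, ((u - 2) / g) * t₂; ((u - 2) / g) * t₃, x] ∧
        Y = !![t₄, (v / g) * t₂; (v / g) * t₃, y] ∧
        u ^ 2 + b * v ^ 2 = 4 ∧
        g ^ 2 * (t₁ ^ 2 + b * t₄ ^ 2) + 4 * t₂ * t₃ * (2 - u) = 2 * g ^ 2)) := by
  obtain ⟨a1, a2, a3, a4, rfl⟩ : ∃ p q r s, X = !![p,q;r,s] :=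
    ⟨_, _, _, _, Matrix.eta_fin_two X⟩
  obtain ⟨d1, d2, d3, d4, rfl⟩ : ∃ p q r s, Y = !![p,q;r,s] :=
    ⟨_, _, _, _, Matrix.eta_fin_two Y⟩
  constructor
  · intro h
    have e11 := congrFun (congrFun h 0) 0
    have e12 := congrFun (congrFun h 0) 1
    have e21 := congrFun (congrFun h 1) 0
    have e22 := congrFun (congrFun h 1) 1
    simp [pow_two, Matrix.mul_apply, Fin.sum_univ_two] at e11 e12 e21 e22
    by_cases ht : a1 + a4 = 0
    · by_cases hs : d1 + d4 = 0
      · -- Case A : both traceless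
        refine Or.inl ⟨a1, a2, a3, d1, d2, d3, ?_, ?_, ?_⟩
        · rw [show a4 = -a1 by omega]
        · rw [show d4 = -d1 by omega]
        · linear_combination e11
      · -- Case B : tr X = 0, tr Y ≠ 0
        have hd2 : d2 = 0 := by
          have h' : b*(d2*(d1+d4)) = 0 := by linear_combination e12 - a2*ht
          rcases mul_eq_zero.mp h' with h'' | h''
          · exact absurd h'' hb
          · rcases mul_eq_zero.mp h'' with h3 | h3
            · exact h3
            · exact absurd h3 hs
        have hd3 : d3 = 0 := by
          have h' : b*(d3*(d1+d4)) = 0 := by linear_combination e21 - a3*ht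
          rcases mul_eq_zero.mp h' with h'' | h''
          · exact absurd h'' hb
          · rcases mul_eq_zero.mp h'' with h3 | h3
            · exact h3
            · exact absurd h3 hs
        have hd14 : d4 = d1 := by
          have h' : b*((d1-d4)*(d1+d4)) = 0 := by
            linear_combination e11 - e22 - (a1-a4)*ht
          rcases mul_eq_zero.mp h' with h'' | h''
          · exact absurd h'' hb
          · rcases mul_eq_zero.mp h'' with h3 | h3
            · omega
            · exact absurd h3 hs
        rcases hb.lt_or_gt with hbneg | hbpos
        · -- b < 0 : case (iii) with u = -2, v = 0, g = 4
          refine Or.inr (Or.inr ⟨hbneg, a1, -a2, -a3, d1, -2, 0, -a1, d1, 4,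
            by norm_num, ?_, by ring, by ring, ?_, ?_, by ring, ?_⟩)
          · norm_num [Int.gcd]
          · rw [show a4 = -a1 by omega]
            norm_num
          · rw [hd2, hd3, hd14]
            norm_num
          · rw [hd2] at e11
            linear_combination 16*e11
        · -- b > 0 : case (ii)
          refine Or.inr (Or.inl ⟨hbpos, a1, a2, a3, d1, ?_, ?_, ?_⟩)
          · rw [show a4 = -a1 by omega]
          · rw [smul_one_fin_two', hd2, hd3, hd14]
          · rw [hd2] at e11
            linear_combination e11
    · by_cases hs : d1 + d4 = 0
      · -- Case C : tr X ≠ 0, tr Y = 0 : impossible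
        exfalso
        have ha2 : a2 = 0 := by
          have h' : a2*(a1+a4) = 0 := by linear_combination e12 - b*d2*hs
          rcases mul_eq_zero.mp h' with h'' | h''
          · exact h''
          · exact absurd h'' ht
        rw [ha2] at e11
        exact sq_plus_mult_ne_two' b hp a1 (d1*d1+d2*d3) (by linear_combination e11)
      · -- Case D : both traces nonzero
        obtain ⟨C, hCdef⟩ : ∃ c : ℤ, c = (a1+a4)*a1 + b*(d1+d4)*d1 := ⟨_, rfl⟩
        have hc0 : (a1+a4)*a4 + b*(d1+d4)*d4 = C := by linear_combination e22 - e11 - hCdef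
        have hc2C : (a1+a4)^2 + b*(d1+d4)^2 = 2*C := by linear_combination hc0 - hCdef
        have hCne : C ≠ 0 := by
          intro h0
          rw [h0] at hc2C
          have hdvd : (d1+d4)^2 ∣ (a1+a4)^2 := ⟨-b, by linarith⟩
          obtain ⟨r, hr⟩ := (Int.pow_dvd_pow_iff two_ne_zero).mp hdvd
          refine hnsq ⟨r, ?_⟩
          have hcc : (d1+d4)^2 * r^2 = (d1+d4)^2 * (-b) := by
            rw [← mul_pow, ← hr]; linarith
          exact (mul_left_cancel₀ (pow_ne_zero 2 hs) hcc).symm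
        have hA : b^2*(d1+d4)^2*(d1*d4 - d2*d3)
            = C^2 - C*(a1+a4)^2 + (a1+a4)^2*(a1*a4 - a2*a3) := by
          linear_combination (-(b*(d1+d4)*d4))*hCdef + (C - (a1+a4)*a1)*hc0
            - (b*(d1+d4)*d3)*e12 + ((a1+a4)*a2)*e21
        have hdX : 2*(a1*a4 - a2*a3) = 2*C - 4 - 2*b*(d1*d4 - d2*d3) := by
          linear_combination hc2C - e11 - e22
        have hKey' : 4*b*C*(d1*d4 - d2*d3) = 2*C^2 - 4*(a1+a4)^2 := by
          linear_combination 2*hA + (a1+a4)^2*hdX - 2*b*(d1*d4-d2*d3)*hc2C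
        have hKey : 2*b*C*(d1*d4 - d2*d3) = C^2 - 2*(a1+a4)^2 := by linarith
        obtain ⟨u, hu⟩ : ∃ u : ℤ, u = C - 2*b*(d1*d4 - d2*d3) - 2 := ⟨_, rfl⟩
        have hCu2 : C*(u+2) = 2*(a1+a4)^2 := by linear_combination C*hu - hKey
        have hCu2' : C*(u-2) = -2*b*(d1+d4)^2 := by linear_combination hCu2 + 2*hc2C
        have hCu : C*u = 2*(a1+a4)^2 - 2*C := by linear_combination hCu2
        obtain ⟨v, hv0⟩ : ∃ v : ℤ, v = (d1+d4)*(a1+a4) - (a1*d1 + a2*d3 + a3*d2 + a4*d4) :=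
          ⟨_, rfl⟩
        have hdX2 : 2*C*(a1*a4 - a2*a3) = C^2 - 2*b*(d1+d4)^2 := by
          linear_combination C*hdX - hKey + 2*hc2C
        have hTr : b*(d1+d4)*(a1*d1 + a2*d3 + a3*d2 + a4*d4)
            = C*(a1+a4) - (a1+a4)^3 + 2*(a1+a4)*(a1*a4 - a2*a3) := by
          linear_combination (-a1)*hCdef + a2*e21 + a3*e12 + a4*hc0
        have hvbs : b*(d1+d4)*(C*v) = b*(d1+d4)*(2*(a1+a4)*(d1+d4)) := by
          linear_combination b*(d1+d4)*C*hv0 - C*hTr - (a1+a4)*hdX2 + C*(a1+a4)*hc2C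
        have hv : C*v = 2*(a1+a4)*(d1+d4) := mul_left_cancel₀ (mul_ne_zero hb hs) hvbs
        have hu4' : C^2*(u^2 + b*v^2) = C^2*4 := by
          linear_combination (C*u + 2*(a1+a4)^2 - 2*C)*hCu
            + b*(C*v + 2*(a1+a4)*(d1+d4))*hv + 4*(a1+a4)^2*hc2C
        have hu4 : u^2 + b*v^2 = 4 := mul_left_cancel₀ (pow_ne_zero 2 hCne) hu4'
        rcases hb.lt_or_gt with hbneg | hbpos
        · -- b < 0 : construct case (iii)
          have hu2' : u - 2 ≠ 0 := by
            intro h0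
            rw [h0, mul_zero] at hCu2'
            have hne : (-2)*b*(d1+d4)^2 ≠ 0 :=
              mul_ne_zero (mul_ne_zero (by norm_num) hb) (pow_ne_zero 2 hs)
            exact hne (by linarith)
          have hx' : C*(2*a4) = C*(u*a1 + v*b*d1) := by
            linear_combination (-a1)*hCu - b*d1*hv + 2*(a1+a4)*hCdef
          have hx : 2*a4 = u*a1 + v*b*d1 := mul_left_cancel₀ hCne hx'
          have hy' : C*(2*d4) = C*(v*a1 - u*d1) := by
            linear_combination d1*hCu - a1*hv + 2*d4*hCdef + 2*d1*hc0
          have hy : 2*d4 = v*a1 - u*d1 := mul_left_cancel₀ hCne hy'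
          have h5 : a2 * v = d2 * (u - 2) := by
            refine mul_left_cancel₀ hCne ?_
            linear_combination a2*hv - d2*hCu2' + 2*(d1+d4)*e12
          have h6 : a3 * v = d3 * (u - 2) := by
            refine mul_left_cancel₀ hCne ?_
            linear_combination a3*hv - d3*hCu2' + 2*(d1+d4)*e21
          obtain ⟨g, hg⟩ : ∃ gg : ℤ, gg = (Int.gcd v (u-2) : ℤ) := ⟨_, rfl⟩
          have hgdu : g ∣ (u - 2) := by rw [hg]; exact Int.gcd_dvd_right _ _
          have hgdv : g ∣ v := by rw [hg]; exact Int.gcd_dvd_left _ _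
          have hGpos : 0 < Int.gcd v (u-2) := Int.gcd_pos_iff.mpr (Or.inr hu2')
          have hgne : g ≠ 0 := by rw [hg]; exact_mod_cast hGpos.ne'
          obtain ⟨w1, hw1⟩ : ∃ w, w = (u-2)/g := ⟨_, rfl⟩
          obtain ⟨w2, hw2⟩ : ∃ w, w = v/g := ⟨_, rfl⟩
          have hgw1 : g * w1 = u - 2 := by rw [hw1]; exact Int.mul_ediv_cancel' hgdu
          have hgw2 : g * w2 = v := by rw [hw2]; exact Int.mul_ediv_cancel' hgdv
          have hw1ne : w1 ≠ 0 := by rintro rfl; rw [mul_zero] at hgw1; exact hu2' hgw1.symm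
          have hcop : IsCoprime w2 w1 := by
            rw [Int.isCoprime_iff_gcd_eq_one, hw1, hw2, hg]
            exact Int.gcd_div_gcd_div_gcd hGpos
          have h7 : a2 * w2 = d2 * w1 := by
            refine mul_left_cancel₀ hgne ?_
            linear_combination h5 + a2*hgw2 - d2*hgw1
          obtain ⟨t2, ht2⟩ : w1 ∣ a2 :=
            hcop.symm.dvd_of_dvd_mul_right ⟨d2, by linear_combination h7⟩
          have hd2 : d2 = w2 * t2 := by
            refine mul_left_cancel₀ hw1ne ?_
            linear_combination -h7 + w2*ht2
          have h8 : a3 * w2 = d3 * w1 := by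
            refine mul_left_cancel₀ hgne ?_
            linear_combination h6 + a3*hgw2 - d3*hgw1
          obtain ⟨t3, ht3⟩ : w1 ∣ a3 :=
            hcop.symm.dvd_of_dvd_mul_right ⟨d3, by linear_combination h8⟩
          have hd3 : d3 = w2 * t3 := by
            refine mul_left_cancel₀ hw1ne ?_
            linear_combination -h8 + w2*ht3
          refine Or.inr (Or.inr ⟨hbneg, a1, t2, t3, d1, u, v, a4, d4, g,
            fun h0 => hu2' (by omega), hg, hx, hy, ?_, ?_, hu4, ?_⟩)
          · rw [← hw1, ht2, ht3]
          · rw [← hw2, hd2, hd3]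
          · rw [ht2, ht3, hd2, hd3] at e11
            linear_combination g^2*e11 - t2*t3*(g*w1 + (u-2))*hgw1
              - b*t2*t3*(g*w2 + v)*hgw2 - t2*t3*hu4
        · -- b > 0 : contradiction
          exfalso
          have ht2pos : 0 < (a1+a4)^2 := lt_of_le_of_ne (sq_nonneg _) (Ne.symm (pow_ne_zero 2 ht))
          have hs2pos : 0 < (d1+d4)^2 := lt_of_le_of_ne (sq_nonneg _) (Ne.symm (pow_ne_zero 2 hs))
          have hbs2 : 0 ≤ b*(d1+d4)^2 := mul_nonneg hbpos.le (sq_nonneg _)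
          have hCpos : 0 < C := by linarith
          have hvne : v ≠ 0 := by
            rintro rfl
            rw [mul_zero] at hv
            exact (mul_ne_zero ht hs) (by linarith)
          have hu_lb : -1 ≤ u := by
            by_contra h'
            have h1 : C*(u+2) ≤ 0 := mul_nonpos_of_nonneg_of_nonpos hCpos.le (by omega)
            rw [hCu2] at h1
            linarith
          have hu_ub : u ≤ 1 := by
            by_contra h'
            have h1 : 0 ≤ C*(u-2) := mul_nonneg hCpos.le (by omega)
            rw [hCu2'] at h1
            have := mul_pos hbpos hs2pos
            linarith
          have hv1 : 1 ≤ v^2 := by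
            clear * - hvne
            rcases lt_or_gt_of_ne hvne with h'|h' <;> nlinarith
          have hble : b ≤ 4 := by
            clear * - hu4 hv1 hbpos
            nlinarith [sq_nonneg u, mul_nonneg hbpos.le (sub_nonneg.mpr hv1)]
          obtain ⟨p, pp, pd, p8⟩ := hp
          have hp3 : 3 ≤ p := by have := pp.two_le; omega
          have hpb : (p:ℤ) ≤ b := Int.le_of_dvd hbpos pd
          have hp4 : p ≤ 4 := by exact_mod_cast le_trans hpb hble
          have hpe : p = 3 := by omega
          rw [hpe] at pd
          have pd' : (3:ℤ) ∣ b := by exact_mod_cast pd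
          obtain ⟨k, hk⟩ := pd'
          omega
  · rintro (⟨t1, t2, t3, s1, s2, s3, hX, hY, hrel⟩ |
      ⟨hbpos, t1, t2, t3, t4, hX, hY, hrel⟩ |
      ⟨hbneg, t1, t2, t3, t4, u, v, x, y, g, hu2, hg, hx, hy, hX, hY, hu4, hrel⟩)
    · rw [hX, hY]; exact rev_case_i b t1 t2 t3 s1 s2 s3 hrel
    · rw [hX, hY]; exact rev_case_ii b t1 t2 t3 t4 hrel
    · rw [hX, hY]; exact rev_case_iii b t1 t2 t3 t4 u v x y g hu2 hg hx hy hu4 hrel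
end

section
/- Let b be a nonzero integer such that −b is not a perfect square, and suppose b has a prime divisor p with p ≡ 5 (mod 8) or p ≡ 7 (mod 8). Then X, Y ∈ M₂(ℤ) satisfy X² + bY² = −2I if and only if one of the following holds: (i) X = [[t₁, t₂],[t₃, −t₁]] and Y = [[s₁, s₂],[s₃, −s₁]] for integers with t₁² + t₂t₃ + b(s₁² + s₂s₃) = −2; (ii) b > 0 and X = [[t₁, t₂],[t₃, −t₁]], Y = t₄I for integers with t₁² + t₂t₃ + b·t₄² = −2; (iii) b < 0 and there exist integers t₁, t₂, t₃, t₄, u, v, x, y with u ≠ −2, g = gcd(v, u + 2), such that −2x = u·t₁ + v·b·t₄ and −2y = v·t₁ − u·t₄, X = [[t₁, ((u+2)/g)·t₂],[((u+2)/g)·t₃, x]], Y = [[t₄, (v/g)·t₂],[(v/g)·t₃, y]], and the relations u² + bv² = 4 and g²(t₁² + b·t₄²) + 4t₂t₃·(2 + u) = −2g² hold. -/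
private lemma aux_expand (b x1 x2 x3 x4 y1 y2 y3 y4 : ℤ) :
    (!![x1,x2;x3,x4])^2 + b • (!![y1,y2;y3,y4])^2 =
    !![x1*x1+x2*x3 + b*(y1*y1+y2*y3), x1*x2+x2*x4 + b*(y1*y2+y2*y4);
       x1*x3+x4*x3 + b*(y1*y3+y4*y3), x3*x2+x4*x4 + b*(y3*y2+y4*y4)] := by
  rw [pow_two, pow_two, Matrix.mul_fin_two, Matrix.mul_fin_two]
  ext i j
  fin_cases i <;> fin_cases j <;> simp <;> try ring

private lemma aux_neg2I : (-2:ℤ) • (1 : Matrix (Fin 2) (Fin 2) ℤ) = !![-2,0;0,-2] := by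
  ext i j; fin_cases i <;> fin_cases j <;> simp

private lemma aux_smul_one (t : ℤ) : t • (1 : Matrix (Fin 2) (Fin 2) ℤ) = !![t,0;0,t] := by
  ext i j; fin_cases i <;> fin_cases j <;> simp

private lemma fin2_eq_iff (a b c d e f g h : ℤ) :
    !![a,b;c,d] = !![e,f;g,h] ↔ a = e ∧ b = f ∧ c = g ∧ d = h := by
  rw [← Matrix.ext_iff]
  constructor
  · intro hyp; exact ⟨hyp 0 0, hyp 0 1, hyp 1 0, hyp 1 1⟩
  · rintro ⟨h1,h2,h3,h4⟩ i j; fin_cases i <;> fin_cases j <;> assumption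

private lemma prime_no (p : ℕ) (pp : p.Prime) (h5 : p % 8 = 5 ∨ p % 8 = 7) (a k bb : ℤ)
    (hdvd : (p:ℤ) ∣ bb) (heq : a^2 + bb*k = -2) : False := by
  haveI : Fact p.Prime := ⟨pp⟩
  have hp2 : p ≠ 2 := by rintro rfl; omega
  have hsq : IsSquare (-2 : ZMod p) := by
    refine ⟨(a : ZMod p), ?_⟩
    have h1 : ((a^2 + bb*k : ℤ) : ZMod p) = ((-2 : ℤ) : ZMod p) := by rw [heq]
    have h2 : ((bb : ℤ) : ZMod p) = 0 := (ZMod.intCast_zmod_eq_zero_iff_dvd bb p).mpr hdvd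
    push_cast at h1
    rw [h2] at h1
    linear_combination -h1
  rw [ZMod.exists_sq_eq_neg_two_iff hp2] at hsq
  omega

set_option maxHeartbeats 1000000 in
theorem stmt_19 (b : ℤ) (hb : b ≠ 0) (hnsq : ¬ ∃ s : ℤ, -b = s ^ 2)
    (hp : ∃ p : ℕ, p.Prime ∧ (p : ℤ) ∣ b ∧ (p % 8 = 5 ∨ p % 8 = 7))
    (X Y : Matrix (Fin 2) (Fin 2) ℤ) :
    (X ^ 2 + b • Y ^ 2 = (-2 : ℤ) • (1 : Matrix (Fin 2) (Fin 2) ℤ)) ↔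
    ((∃ t₁ t₂ t₃ s₁ s₂ s₃ : ℤ, X = !![t₁, t₂; t₃, -t₁] ∧ Y = !![s₁, s₂; s₃, -s₁] ∧
        t₁ ^ 2 + t₂ * t₃ + b * (s₁ ^ 2 + s₂ * s₃) = -2) ∨
     (b > 0 ∧ ∃ t₁ t₂ t₃ t₄ : ℤ, X = !![t₁, t₂; t₃, -t₁] ∧
        Y = t₄ • (1 : Matrix (Fin 2) (Fin 2) ℤ) ∧ t₁ ^ 2 + t₂ * t₃ + b * t₄ ^ 2 = -2) ∨
     (b < 0 ∧ ∃ t₁ t₂ t₃ t₄ u v x y g : ℤ, u ≠ -2 ∧ g = Int.gcd v (u + 2) ∧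
        -2 * x = u * t₁ + v * b * t₄ ∧ -2 * y = v * t₁ - u * t₄ ∧
        X = !![t₁, ((u + 2) / g) * t₂; ((u + 2) / g) * t₃, x] ∧
        Y = !![t₄, (v / g) * t₂; (v / g) * t₃, y] ∧
        u ^ 2 + b * v ^ 2 = 4 ∧
        g ^ 2 * (t₁ ^ 2 + b * t₄ ^ 2) + 4 * t₂ * t₃ * (2 + u) = -2 * g ^ 2)) := by
  obtain ⟨x1,x2,x3,x4, rfl⟩ : ∃ a b c d, X = !![a,b;c,d] := ⟨_,_,_,_, Matrix.eta_fin_two X⟩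
  obtain ⟨y1,y2,y3,y4, rfl⟩ : ∃ a b c d, Y = !![a,b;c,d] := ⟨_,_,_,_, Matrix.eta_fin_two Y⟩
  rw [aux_expand, aux_neg2I, fin2_eq_iff]
  constructor
  · rintro ⟨E1, E2, E3, E4⟩
    by_cases hT : x1 + x4 = 0
    · by_cases hS : y1 + y4 = 0
      · -- both traceless: case (i)
        left
        refine ⟨x1, x2, x3, y1, y2, y3,
          (fin2_eq_iff _ _ _ _ _ _ _ _).mpr ⟨rfl, rfl, rfl, by linarith⟩,
          (fin2_eq_iff _ _ _ _ _ _ _ _).mpr ⟨rfl, rfl, rfl, by linarith⟩,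
          by linear_combination E1⟩
      · -- trace X = 0, trace Y ≠ 0: Y is scalar
        have hy2 : y2 = 0 := by
          have h0 : (b*(y1+y4))*y2 = 0 := by linear_combination E2 - x2*hT
          exact (mul_eq_zero.mp h0).resolve_left (mul_ne_zero hb hS)
        have hy3 : y3 = 0 := by
          have h0 : (b*(y1+y4))*y3 = 0 := by linear_combination E3 - x3*hT
          exact (mul_eq_zero.mp h0).resolve_left (mul_ne_zero hb hS)
        have hy14 : y1 = y4 := by
          have h0 : (b*(y1+y4))*(y1-y4) = 0 := by linear_combination E1 - E4 - (x1-x4)*hT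
          have := (mul_eq_zero.mp h0).resolve_left (mul_ne_zero hb hS)
          linarith
        rcases hb.lt_or_gt with hbneg | hbpos
        · right; right
          refine ⟨hbneg, x1, x2, x3, y1, 2, 0, x4, y4, 4, by norm_num, by decide,
            by linear_combination -2*hT, by linear_combination 2*hy14,
            (fin2_eq_iff _ _ _ _ _ _ _ _).mpr ⟨rfl, by norm_num, by norm_num, rfl⟩,
            (fin2_eq_iff _ _ _ _ _ _ _ _).mpr ⟨rfl, by rw [hy2]; norm_num,
              by rw [hy3]; norm_num, rfl⟩,
            by norm_num, by linear_combination 16*E1 - 16*b*y3*hy2⟩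
        · right; left
          refine ⟨hbpos, x1, x2, x3, y1,
            (fin2_eq_iff _ _ _ _ _ _ _ _).mpr ⟨rfl, rfl, rfl, by linarith⟩, ?_,
            by linear_combination E1 - b*y3*hy2⟩
          rw [aux_smul_one]
          exact (fin2_eq_iff _ _ _ _ _ _ _ _).mpr ⟨rfl, hy2, hy3, hy14.symm⟩
    · by_cases hS : y1 + y4 = 0
      · -- trace X ≠ 0, trace Y = 0 : impossible
        exfalso
        have hx2 : x2 = 0 := by
          have h0 : (x1+x4)*x2 = 0 := by linear_combination E2 - b*y2*hS
          exact (mul_eq_zero.mp h0).resolve_left hT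
        obtain ⟨p, pp, pdvd, p57⟩ := hp
        exact prime_no p pp p57 x1 (y1*y1 + y2*y3) b pdvd
          (by linear_combination E1 - x3*hx2)
      · -- main case: both traces nonzero
        obtain ⟨T, hTd⟩ : ∃ t, t = x1 + x4 := ⟨_, rfl⟩
        obtain ⟨S, hSd⟩ : ∃ t, t = y1 + y4 := ⟨_, rfl⟩
        obtain ⟨c, hc⟩ : ∃ t, t = T*x1 + b*S*y1 := ⟨_, rfl⟩
        have hTne : T ≠ 0 := by rw [hTd]; exact hT
        have hSne : S ≠ 0 := by rw [hSd]; exact hS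
        have h2 : T*x2 = -(b*S*y2) := by linear_combination E2 + x2*hTd + b*y2*hSd
        have h3 : T*x3 = -(b*S*y3) := by linear_combination E3 + x3*hTd + b*y3*hSd
        have h4 : T*x4 + b*S*y4 = c := by
          linear_combination E4 - E1 - hc + (x4-x1)*hTd + b*(y4-y1)*hSd
        have hF2 : T^2 + b*S^2 = 2*c := by linear_combination h4 - hc + T*hTd + b*S*hSd
        have hcne : c ≠ 0 := by
          intro h0
          have hTS : T^2 = (-b)*S^2 := by linear_combination hF2 + 2*h0
          have hdvd : S ∣ T := (Int.pow_dvd_pow_iff two_ne_zero).mp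
            ⟨-b, by linear_combination hTS⟩
          obtain ⟨k, hk⟩ := hdvd
          refine hnsq ⟨k, ?_⟩
          have h5 : S^2*(k^2 - (-b)) = 0 := by linear_combination hTS - (S*k + T)*hk
          have h6 := (mul_eq_zero.mp h5).resolve_left (pow_ne_zero 2 hSne)
          linarith
        obtain ⟨u, hu⟩ : ∃ t, t = 2*(x1*x4 - x2*x3) - c - 2 := ⟨_, rfl⟩
        obtain ⟨v, hv⟩ : ∃ t, t = x1*y4 + x4*y1 - x2*y3 - x3*y2 := ⟨_, rfl⟩
        have k1p : c^2 - 2*b*c*S*y1 + b^2*S^2*y1^2 = T^2*x1^2 := by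
          linear_combination (c - b*S*y1 + T*x1)*hc
        have k2 : T^2*x2*x3 = b^2*S^2*y2*y3 := by linear_combination T*x3*h2 - b*S*y2*h3
        have hdX : c^2 + 2*b*S^2 = 2*c*(x1*x4 - x2*x3) := by
          linear_combination -k1p + k2 + b*S^2*E1 - (x1*x1+x2*x3)*hF2 + 2*c*x1*hTd + 2*c*hc
        have hcu : c*u = b*S^2 - T^2 := by linear_combination c*hu - hdX + hF2
        have hcv : c*v = -(2*S*T) := by
          have h0 : (b*S)*(c*v + 2*S*T) = 0 := by
            linear_combination b*S*c*hv + c*x1*h4 - c*x4*hc - c*x2*h3 - c*x3*h2 +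
              T*hdX - c^2*hTd
          have h1 := (mul_eq_zero.mp h0).resolve_left (mul_ne_zero hb hSne)
          linarith
        have hu2v : u^2 + b*v^2 = 4 := by
          have h0 : c^2*(u^2 + b*v^2 - 4) = 0 := by
            linear_combination (c*u + b*S^2 - T^2)*hcu + b*(c*v - 2*S*T)*hcv +
              (T^2+b*S^2+2*c)*hF2
          have h1 := (mul_eq_zero.mp h0).resolve_left (pow_ne_zero 2 hcne)
          linarith
        have hA : -2*x4 = u*x1 + v*b*y1 := by
          have h0 : c*(u*x1 + v*b*y1 + 2*x4) = 0 := by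
            linear_combination x1*hcu + b*y1*hcv + x1*hF2 + 2*T*hc - 2*c*hTd
          have h1 := (mul_eq_zero.mp h0).resolve_left hcne
          linarith
        have hB : -2*y4 = v*x1 - u*y1 := by
          have h0 : c*(v*x1 - u*y1 + 2*y4) = 0 := by
            linear_combination x1*hcv - y1*hcu + y1*hF2 + 2*S*hc - 2*c*hSd
          have h1 := (mul_eq_zero.mp h0).resolve_left hcne
          linarith
        have hune : u ≠ -2 := by
          intro h0
          have h1 : 2*(b*S^2) = 0 := by linear_combination -hcu + hF2 + c*h0
          exact (mul_ne_zero hb (pow_ne_zero 2 hSne)) (by linarith)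
        have hvx2 : v*x2 = (u+2)*y2 := by
          have h0 : c*(v*x2 - (u+2)*y2) = 0 := by
            linear_combination x2*hcv - y2*hcu + y2*hF2 - 2*S*h2
          have h1 := (mul_eq_zero.mp h0).resolve_left hcne
          linarith
        have hvx3 : v*x3 = (u+2)*y3 := by
          have h0 : c*(v*x3 - (u+2)*y3) = 0 := by
            linear_combination x3*hcv - y3*hcu + y3*hF2 - 2*S*h3
          have h1 := (mul_eq_zero.mp h0).resolve_left hcne
          linarith
        have hbneg : b < 0 := by
          rcases hb.lt_or_gt with h | h
          · exact h
          exfalso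
          have hvne : v ≠ 0 := by
            intro h0
            rw [h0, mul_zero] at hcv
            have hST := (mul_eq_zero.mp (show S*T = 0 by linarith)).imp id id
            rcases hST with h' | h'
            · exact hSne h'
            · exact hTne h'
          have hv2 : 1 ≤ v^2 := by
            have h1 := Int.one_le_abs hvne
            nlinarith [sq_abs v]
          have hble : b ≤ 4 := by nlinarith [sq_nonneg u]
          obtain ⟨p, pp, pdvd, p57⟩ := hp
          have hp5 : (5:ℕ) ≤ p := by omega
          have hpb : (p:ℤ) ≤ b := Int.le_of_dvd h pdvd
          have : (5:ℤ) ≤ (p:ℤ) := by exact_mod_cast hp5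
          linarith
        have hu2 : u + 2 ≠ 0 := fun h => hune (by linarith)
        obtain ⟨G, hG⟩ : ∃ t:ℤ, t = ((Int.gcd v (u+2) : ℕ) : ℤ) := ⟨_, rfl⟩
        have hGne : G ≠ 0 := by
          rw [hG]
          simp only [ne_eq, Int.natCast_eq_zero, Int.gcd_eq_zero_iff]
          rintro ⟨-, h⟩; exact hu2 h
        have hdn : G ∣ (u+2) := by rw [hG]; exact Int.gcd_dvd_right _ _
        have hdm : G ∣ v := by rw [hG]; exact Int.gcd_dvd_left _ _
        obtain ⟨n, hn'⟩ : ∃ t, t = (u+2)/G := ⟨_, rfl⟩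
        obtain ⟨m, hm'⟩ : ∃ t, t = v/G := ⟨_, rfl⟩
        have hn : G*n = u+2 := by rw [hn']; exact Int.mul_ediv_cancel' hdn
        have hm : G*m = v := by rw [hm']; exact Int.mul_ediv_cancel' hdm
        have hnne : n ≠ 0 := by
          intro h0; rw [h0, mul_zero] at hn; exact hu2 hn.symm
        have hcop : Int.gcd n m = 1 := by
          have hpos : 0 < Int.gcd v (u+2) := by
            rcases Nat.eq_zero_or_pos (Int.gcd v (u+2)) with h0 | h0
            · exact absurd (Int.gcd_eq_zero_iff.mp h0).2 hu2
            · exact h0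
          have hgg := Int.gcd_div_gcd_div_gcd hpos
          rw [hn', hm', hG, Int.gcd_comm]
          exact hgg
        have hmx : m*x2 = n*y2 := by
          apply mul_left_cancel₀ hGne
          linear_combination x2*hm - y2*hn + hvx2
        have hmx3 : m*x3 = n*y3 := by
          apply mul_left_cancel₀ hGne
          linear_combination x3*hm - y3*hn + hvx3
        obtain ⟨T2, hT2⟩ : n ∣ x2 :=
          Int.dvd_of_dvd_mul_left_of_gcd_one ⟨y2, by linear_combination hmx⟩ hcop
        have hy2T : y2 = m*T2 := by
          apply mul_left_cancel₀ hnne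
          linear_combination -hmx + m*hT2
        obtain ⟨T3, hT3⟩ : n ∣ x3 :=
          Int.dvd_of_dvd_mul_left_of_gcd_one ⟨y3, by linear_combination hmx3⟩ hcop
        have hy3T : y3 = m*T3 := by
          apply mul_left_cancel₀ hnne
          linear_combination -hmx3 + m*hT3
        right; right
        refine ⟨hbneg, x1, T2, T3, y1, u, v, x4, y4, G, hune, hG, hA, hB,
          (fin2_eq_iff _ _ _ _ _ _ _ _).mpr ⟨rfl, by rw [← hn']; exact hT2,
            by rw [← hn']; exact hT3, rfl⟩,
          (fin2_eq_iff _ _ _ _ _ _ _ _).mpr ⟨rfl, by rw [← hm']; exact hy2T,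
            by rw [← hm']; exact hy3T, rfl⟩,
          hu2v, ?_⟩
        linear_combination G^2*E1 - G^2*(x3*hT2 + n*T2*hT3) - b*G^2*(y3*hy2T + m*T2*hy3T) -
          T2*T3*((G*n + u + 2)*hn + b*(G*m+v)*hm) - T2*T3*hu2v
  · rintro (⟨t1,t2,t3,s1,s2,s3,hX,hY,heq⟩ | ⟨hbpos, t1,t2,t3,t4,hX,hY,heq⟩ |
      ⟨hbneg, t1,t2,t3,t4,u,v,x,y,g,hune,hg,hx,hy,hX,hY,hu2v,hK⟩)
    · obtain ⟨e1,e2,e3,e4⟩ := (fin2_eq_iff _ _ _ _ _ _ _ _).mp hX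
      obtain ⟨f1,f2,f3,f4⟩ := (fin2_eq_iff _ _ _ _ _ _ _ _).mp hY
      subst e1 e2 e3 e4 f1 f2 f3 f4
      exact ⟨by linear_combination heq, by ring, by ring, by linear_combination heq⟩
    · rw [aux_smul_one] at hY
      obtain ⟨e1,e2,e3,e4⟩ := (fin2_eq_iff _ _ _ _ _ _ _ _).mp hX
      obtain ⟨f1,f2,f3,f4⟩ := (fin2_eq_iff _ _ _ _ _ _ _ _).mp hY
      subst e1 e2 e3 e4 f1 f2 f3 f4
      exact ⟨by linear_combination heq, by ring, by ring, by linear_combination heq⟩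
    · obtain ⟨e1,e2,e3,e4⟩ := (fin2_eq_iff _ _ _ _ _ _ _ _).mp hX
      obtain ⟨f1,f2,f3,f4⟩ := (fin2_eq_iff _ _ _ _ _ _ _ _).mp hY
      subst e1 e2 e3 e4 f1 f2 f3 f4
      have hu2 : u + 2 ≠ 0 := fun h => hune (by linarith)
      have hgne : g ≠ 0 := by
        rw [hg]
        simp only [ne_eq, Int.natCast_eq_zero, Int.gcd_eq_zero_iff]
        rintro ⟨-, h⟩; exact hu2 h
      have hdn : g ∣ (u+2) := by rw [hg]; exact Int.gcd_dvd_right _ _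
      have hdm : g ∣ v := by rw [hg]; exact Int.gcd_dvd_left _ _
      have hn : g * ((u+2)/g) = u + 2 := Int.mul_ediv_cancel' hdn
      have hm : g * (v/g) = v := Int.mul_ediv_cancel' hdm
      refine ⟨?_, ?_, ?_, ?_⟩
      · apply mul_left_cancel₀ (pow_ne_zero 2 hgne)
        linear_combination hK + t2*t3*((g*((u+2)/g) + u+2)*hn + b*(g*(v/g) + v)*hm + hu2v)
      · apply mul_left_cancel₀ (mul_ne_zero (two_ne_zero) hgne)
        linear_combination t2*((2*x1 + 2*x4)*hn + b*(2*y1+2*y4)*hm) - t2*(u+2)*hx -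
          t2*b*v*hy - x1*t2*hu2v
      · apply mul_left_cancel₀ (mul_ne_zero (two_ne_zero) hgne)
        linear_combination t3*((2*x1 + 2*x4)*hn + b*(2*y1+2*y4)*hm) - t3*(u+2)*hx -
          t3*b*v*hy - x1*t3*hu2v
      · apply mul_left_cancel₀ (mul_ne_zero (by norm_num : (4:ℤ) ≠ 0) (pow_ne_zero 2 hgne))
        linear_combination (-(g^2)*(2*x4 - (u*x1+v*b*y1)))*hx - b*g^2*(2*y4 - (v*x1-u*y1))*hy +
          4*t2*t3*((g*((u+2)/g)+u+2)*hn + b*(g*(v/g)+v)*hm + hu2v) +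
          (x1^2+b*y1^2)*g^2*hu2v + 4*hK
end
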